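/- As n → ∞, ‖p_n‖_1 ∼ 8/(2π)^{n+1}; that is, lim_{n→∞} (2π)^{n+1} · (∫_0^1 |B_n(x)| dx) / (8 · n!) = 1. -/

import Mathlib

open Filter Real MeasureTheory intervalIntegral

/-- The `n`-th Bernoulli polynomial, evaluated at a real number `x`. -/
noncomputable def bernPoly (n : ℕ) (x : ℝ) : ℝ :=
  Polynomial.aeval x (Polynomial.bernoulli n)

open Set


lemma int_abs_cos_two_pi : ∫ x in (0:ℝ)..(2*π), |Real.cos x| = 4 := by
  have hpi := pi_pos
  have h1 : ∫ x in (0:ℝ)..(π/2), |Real.cos x| = 1 := by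
    rw [intervalIntegral.integral_congr (g := Real.cos) ?_, integral_cos,
      Real.sin_zero, Real.sin_pi_div_two]
    · norm_num
    · intro x hx
      rw [uIcc_of_le (by positivity)] at hx
      exact abs_of_nonneg (Real.cos_nonneg_of_mem_Icc ⟨by linarith [hx.1], hx.2⟩)
  have h2 : ∫ x in (π/2)..(3*π/2), |Real.cos x| = 2 := by
    rw [intervalIntegral.integral_congr (g := fun x => -Real.cos x) ?_]
    · rw [intervalIntegral.integral_neg, integral_cos]
      rw [show (3:ℝ)*π/2 = π + π/2 by ring, Real.sin_add]
      norm_num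
    · intro x hx
      rw [uIcc_of_le (by linarith)] at hx
      exact abs_of_nonpos (Real.cos_nonpos_of_pi_div_two_le_of_le hx.1 (by linarith [hx.2]))
  have h3 : ∫ x in (3*π/2)..(2*π), |Real.cos x| = 1 := by
    rw [intervalIntegral.integral_congr (g := Real.cos) ?_, integral_cos]
    · rw [show (3:ℝ)*π/2 = π + π/2 by ring, show (2:ℝ)*π = π + π by ring, Real.sin_add,
        Real.sin_add, Real.sin_pi, Real.cos_pi, Real.cos_pi_div_two, Real.sin_pi_div_two]
      ring
    · intro x hx
      rw [uIcc_of_le (by linarith)] at hx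
      have hc : Real.cos x = Real.cos (x - 2*π) := (Real.cos_sub_two_pi x).symm
      have hmem : x - 2*π ∈ Icc (-(π/2)) (π/2) := ⟨by linarith [hx.1], by linarith [hx.2]⟩
      show |Real.cos x| = Real.cos x
      rw [hc]
      exact abs_of_nonneg (Real.cos_nonneg_of_mem_Icc hmem)
  have hi : ∀ a b : ℝ, IntervalIntegrable (fun x => |Real.cos x|) volume a b :=
    fun a b => (Real.continuous_cos.abs).intervalIntegrable a b
  rw [← intervalIntegral.integral_add_adjacent_intervals (a := (0:ℝ)) (b := π/2) (c := 2*π) (hi _ _) (hi _ _),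
    ← intervalIntegral.integral_add_adjacent_intervals (a := (π/2)) (b := 3*π/2) (c := 2*π) (hi _ _) (hi _ _),
    h1, h2, h3]
  norm_num

lemma int_abs_sin_two_pi : ∫ x in (0:ℝ)..(2*π), |Real.sin x| = 4 := by
  have hpi := pi_pos
  have h1 : ∫ x in (0:ℝ)..π, |Real.sin x| = 2 := by
    rw [intervalIntegral.integral_congr (g := Real.sin) ?_, integral_sin,
      Real.cos_zero, Real.cos_pi]
    · norm_num
    · intro x hx
      rw [uIcc_of_le (by positivity)] at hx
      exact abs_of_nonneg (Real.sin_nonneg_of_nonneg_of_le_pi hx.1 hx.2)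
  have h2 : ∫ x in (π:ℝ)..(2*π), |Real.sin x| = 2 := by
    rw [intervalIntegral.integral_congr (g := fun x => -Real.sin x) ?_]
    · rw [intervalIntegral.integral_neg, integral_sin]
      rw [show (2:ℝ)*π = π + π by ring, Real.cos_add, Real.sin_pi, Real.cos_pi]
      ring
    · intro x hx
      rw [uIcc_of_le (by linarith)] at hx
      have h0 : Real.sin x ≤ 0 := by
        have := Real.sin_nonneg_of_nonneg_of_le_pi (x := x - π) (by linarith [hx.1]) (by linarith [hx.2])
        rw [Real.sin_sub_pi] at this; linarith
      exact abs_of_nonpos h0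
  have hi : ∀ a b : ℝ, IntervalIntegrable (fun x => |Real.sin x|) volume a b :=
    fun a b => (Real.continuous_sin.abs).intervalIntegrable a b
  rw [← intervalIntegral.integral_add_adjacent_intervals (a := (0:ℝ)) (b := π) (c := 2*π) (hi _ _) (hi _ _),
    h1, h2]
  norm_num

lemma int_abs_cos01 : ∫ x in (0:ℝ)..1, |Real.cos (2*π*x)| = 2/π := by
  have hpi := pi_pos
  have h := intervalIntegral.integral_comp_mul_left (a := (0:ℝ)) (b := 1) (fun x => |Real.cos x|) (c := 2*π) (by positivity)
  simp only [mul_zero, mul_one] at h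
  rw [h, int_abs_cos_two_pi, smul_eq_mul]
  rw [eq_div_iff (by positivity)]
  field_simp
  ring
lemma int_abs_sin01 : ∫ x in (0:ℝ)..1, |Real.sin (2*π*x)| = 2/π := by
  have hpi := pi_pos
  have h := intervalIntegral.integral_comp_mul_left (a := (0:ℝ)) (b := 1) (fun x => |Real.sin x|) (c := 2*π) (by positivity)
  simp only [mul_zero, mul_one] at h
  rw [h, int_abs_sin_two_pi, smul_eq_mul]
  rw [eq_div_iff (by positivity)]
  field_simp
  ring



noncomputable def tTail (n : ℕ) : ℝ := ∑' j : ℕ, (1:ℝ)/((j:ℝ)+2)^n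

lemma summable_shift2 {n : ℕ} (hn : 2 ≤ n) : Summable (fun j : ℕ => (1:ℝ)/((j:ℝ)+2)^n) := by
  have h0 : Summable (fun j : ℕ => (1:ℝ)/((j:ℝ))^n) := Real.summable_one_div_nat_pow.mpr hn
  have := (summable_nat_add_iff (f := fun j : ℕ => (1:ℝ)/((j:ℝ))^n) 2).mpr h0
  exact this.congr (by intro j; push_cast; ring_nf)

lemma tTail_nonneg (n : ℕ) : 0 ≤ tTail n :=
  tsum_nonneg (fun j => by positivity)

lemma tTail_le {m : ℕ} : tTail (m+2) ≤ (1/2)^(m+2) * (4 * tTail 2) := by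
  have hs2 : Summable (fun j : ℕ => (1:ℝ)/((j:ℝ)+2)^2) := summable_shift2 le_rfl
  have hsm : Summable (fun j : ℕ => (1:ℝ)/((j:ℝ)+2)^(m+2)) := summable_shift2 (by omega)
  have hle : ∀ j : ℕ, (1:ℝ)/((j:ℝ)+2)^(m+2) ≤ (1/2)^m * ((1:ℝ)/((j:ℝ)+2)^2) := by
    intro j
    have h2 : (0:ℝ) < (j:ℝ)+2 := by positivity
    have hj : (1:ℝ)/((j:ℝ)+2) ≤ 1/2 := by
      apply one_div_le_one_div_of_le <;> [norm_num; skip]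
      have := Nat.cast_nonneg (α := ℝ) j; linarith
    have hnn : (0:ℝ) ≤ 1/((j:ℝ)+2) := by positivity
    calc (1:ℝ)/((j:ℝ)+2)^(m+2) = (1/((j:ℝ)+2))^m * (1/((j:ℝ)+2))^2 := by
          rw [← pow_add, one_div_pow]
      _ ≤ (1/2)^m * ((1:ℝ)/((j:ℝ)+2)^2) := by
          rw [← one_div_pow]
          exact mul_le_mul (pow_le_pow_left₀ hnn hj m) le_rfl (by positivity) (by positivity)
  calc tTail (m+2) ≤ ∑' j : ℕ, (1/2)^m * ((1:ℝ)/((j:ℝ)+2)^2) :=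
        Summable.tsum_le_tsum hle hsm (hs2.mul_left _)
    _ = (1/2)^m * tTail 2 := tsum_mul_left
    _ = (1/2)^(m+2) * (4 * tTail 2) := by ring

lemma tail_bound {F : ℕ → ℝ} {S m : ℝ} {b : ℕ → ℝ} (h : HasSum F S) (h0 : F 0 = 0)
    (h1 : F 1 = m) (hb : ∀ j, |F (j+2)| ≤ b j) (hbs : Summable b) : |S - m| ≤ ∑' j, b j := by
  have htail : HasSum (fun j => F (j+2)) (S - (F 0 + F 1)) := by
    apply (hasSum_nat_add_iff (f := F) 2).mpr
    convert h using 1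
    · rfl
    rw [Finset.sum_range_succ, Finset.sum_range_one]
    ring
  have hsA : Summable (fun j => |F (j+2)|) := hbs.of_nonneg_of_le (fun j => abs_nonneg _) hb
  have hkey : |S - (F 0 + F 1)| ≤ ∑' j, b j := by
    rw [← htail.tsum_eq]
    calc |∑' j, F (j+2)| ≤ ∑' j, |F (j+2)| := by
          simpa using norm_tsum_le_tsum_norm (f := fun j => F (j+2)) (by simpa using hsA)
      _ ≤ ∑' j, b j := Summable.tsum_le_tsum hb hsA hbs
  rwa [h0, h1, zero_add] at hkey


noncomputable def gfun (n : ℕ) (x : ℝ) : ℝ :=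
  (2*π)^n / (n.factorial : ℝ) * bernPoly n x

lemma bernPoly_eq (n : ℕ) (x : ℝ) :
    bernPoly n x = (Polynomial.map (algebraMap ℚ ℝ) (Polynomial.bernoulli n)).eval x := by
  rw [bernPoly, Polynomial.aeval_def, Polynomial.eval_map]

noncomputable def trigA (n : ℕ) (x : ℝ) : ℝ :=
  if Even n then |Real.cos (2*π*x)| else |Real.sin (2*π*x)|

lemma pointwise_est {n : ℕ} (hn : 2 ≤ n) {x : ℝ} (hx : x ∈ Icc (0:ℝ) 1) :
    abs (|gfun n x| - 2 * trigA n x) ≤ 2 * tTail n := by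
  unfold trigA
  rcases Nat.even_or_odd n with hpar | hpar
  · -- even case
    obtain ⟨k, hk⟩ := hpar
    have hn2 : n = 2*k := by omega
    have hk0 : k ≠ 0 := by omega
    set A := (-1:ℝ)^(k+1) with hAdef
    have hA1 : |A| = 1 := by rw [hAdef, abs_pow, abs_neg, abs_one, one_pow]
    have hsq : A * A = 1 := by rw [hAdef, ← pow_add]; exact Even.neg_one_pow ⟨k+1, by ring⟩
    have h := hasSum_one_div_nat_pow_mul_cos (k := k) hk0 hx
    have hg : HasSum (fun j : ℕ => 2*A * (1/(j:ℝ)^(2*k) * Real.cos (2*π*j*x))) (gfun n x) := by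
      have hm := h.mul_left (2*A)
      convert hm using 1
      · rfl
      rw [gfun, hn2, bernPoly_eq]
      set E := (Polynomial.map (algebraMap ℚ ℝ) (Polynomial.bernoulli (2*k))).eval x
      linear_combination (-((2*π)^(2*k)/(((2*k).factorial : ℕ):ℝ) * E)) * hsq
    have h0 : 2*A * (1/((0:ℕ):ℝ)^(2*k) * Real.cos (2*π*(0:ℕ)*x)) = 0 := by
      norm_num [zero_pow (by omega : 2*k ≠ 0)]
    have h1 : 2*A * (1/((1:ℕ):ℝ)^(2*k) * Real.cos (2*π*(1:ℕ)*x)) = 2*A * Real.cos (2*π*x) := by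
      norm_num
    have hb : ∀ j : ℕ, |2*A * (1/((j+2:ℕ):ℝ)^(2*k) * Real.cos (2*π*(j+2:ℕ)*x))|
        ≤ 2 * ((1:ℝ)/((j:ℝ)+2)^(2*k)) := by
      intro j
      have hcast : ((j+2:ℕ):ℝ) = (j:ℝ)+2 := by push_cast; ring
      rw [hcast, abs_mul, abs_mul, abs_mul, hA1, abs_of_nonneg (by positivity : (0:ℝ) ≤ 1/((j:ℝ)+2)^(2*k))]
      have hcos := Real.abs_cos_le_one (2*π*((j:ℝ)+2)*x)
      have hc : (0:ℝ) ≤ 1/((j:ℝ)+2)^(2*k) := by positivity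
      rw [abs_two]
      nlinarith [abs_nonneg (Real.cos (2*π*((j:ℝ)+2)*x))]
    have hbs : Summable (fun j : ℕ => 2 * ((1:ℝ)/((j:ℝ)+2)^(2*k))) :=
      (summable_shift2 (by omega)).mul_left 2
    have hfin := tail_bound hg h0 h1 hb hbs
    rw [tsum_mul_left] at hfin
    rw [if_pos ⟨k, hk⟩]
    have hAbs : |2*A * Real.cos (2*π*x)| = 2 * |Real.cos (2*π*x)| := by
      rw [abs_mul, abs_mul, hA1, abs_two]; ring
    calc abs (|gfun n x| - 2 * |Real.cos (2*π*x)|)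
        = abs (|gfun n x| - |2*A * Real.cos (2*π*x)|) := by rw [hAbs]
      _ ≤ |gfun n x - 2*A * Real.cos (2*π*x)| := abs_abs_sub_abs_le_abs_sub _ _
      _ ≤ 2 * tTail n := by rw [tTail]; rw [hn2] at hfin ⊢; exact hfin
  · -- odd case
    obtain ⟨k, hk⟩ := hpar
    have hk0 : k ≠ 0 := by omega
    set A := (-1:ℝ)^(k+1) with hAdef
    have hA1 : |A| = 1 := by rw [hAdef, abs_pow, abs_neg, abs_one, one_pow]
    have hsq : A * A = 1 := by rw [hAdef, ← pow_add]; exact Even.neg_one_pow ⟨k+1, by ring⟩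
    have h := hasSum_one_div_nat_pow_mul_sin (k := k) hk0 hx
    have hg : HasSum (fun j : ℕ => 2*A * (1/(j:ℝ)^(2*k+1) * Real.sin (2*π*j*x))) (gfun n x) := by
      have hm := h.mul_left (2*A)
      convert hm using 1
      · rfl
      rw [gfun, hk, bernPoly_eq]
      set E := (Polynomial.map (algebraMap ℚ ℝ) (Polynomial.bernoulli (2*k+1))).eval x
      linear_combination (-((2*π)^(2*k+1)/(((2*k+1).factorial : ℕ):ℝ) * E)) * hsq
    have h0 : 2*A * (1/((0:ℕ):ℝ)^(2*k+1) * Real.sin (2*π*(0:ℕ)*x)) = 0 := by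
      norm_num
    have h1 : 2*A * (1/((1:ℕ):ℝ)^(2*k+1) * Real.sin (2*π*(1:ℕ)*x)) = 2*A * Real.sin (2*π*x) := by
      norm_num
    have hb : ∀ j : ℕ, |2*A * (1/((j+2:ℕ):ℝ)^(2*k+1) * Real.sin (2*π*(j+2:ℕ)*x))|
        ≤ 2 * ((1:ℝ)/((j:ℝ)+2)^(2*k+1)) := by
      intro j
      have hcast : ((j+2:ℕ):ℝ) = (j:ℝ)+2 := by push_cast; ring
      rw [hcast, abs_mul, abs_mul, abs_mul, hA1, abs_of_nonneg (by positivity : (0:ℝ) ≤ 1/((j:ℝ)+2)^(2*k+1))]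
      have hsin := Real.abs_sin_le_one (2*π*((j:ℝ)+2)*x)
      have hc : (0:ℝ) ≤ 1/((j:ℝ)+2)^(2*k+1) := by positivity
      rw [abs_two]
      nlinarith [abs_nonneg (Real.sin (2*π*((j:ℝ)+2)*x))]
    have hbs : Summable (fun j : ℕ => 2 * ((1:ℝ)/((j:ℝ)+2)^(2*k+1))) :=
      (summable_shift2 (by omega)).mul_left 2
    have hfin := tail_bound hg h0 h1 hb hbs
    rw [tsum_mul_left] at hfin
    rw [if_neg (by simp [hk, Nat.even_iff, Nat.odd_iff.mp ⟨k, hk⟩] : ¬ Even n)]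
    have hAbs : |2*A * Real.sin (2*π*x)| = 2 * |Real.sin (2*π*x)| := by
      rw [abs_mul, abs_mul, hA1, abs_two]; ring
    calc abs (|gfun n x| - 2 * |Real.sin (2*π*x)|)
        = abs (|gfun n x| - |2*A * Real.sin (2*π*x)|) := by rw [hAbs]
      _ ≤ |gfun n x - 2*A * Real.sin (2*π*x)| := abs_abs_sub_abs_le_abs_sub _ _
      _ ≤ 2 * tTail n := by rw [tTail]; rw [hk] at hfin ⊢; exact hfin


lemma cont_bern (n : ℕ) : Continuous (fun x : ℝ => bernPoly n x) := by
  simp only [bernPoly_eq]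
  exact Polynomial.continuous _

lemma cont_absg (n : ℕ) : Continuous (fun x : ℝ => |gfun n x|) := by
  unfold gfun
  exact (continuous_const.mul (cont_bern n)).abs

lemma cont_trigA (n : ℕ) : Continuous (fun x : ℝ => trigA n x) := by
  unfold trigA
  split_ifs
  · exact (Real.continuous_cos.comp (continuous_const.mul continuous_id)).abs
  · exact (Real.continuous_sin.comp (continuous_const.mul continuous_id)).abs

lemma int_trigA (n : ℕ) : ∫ x in (0:ℝ)..1, trigA n x = 2/π := by
  unfold trigA
  split_ifs
  · exact int_abs_cos01
  · exact int_abs_sin01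

lemma int_est {n : ℕ} (hn : 2 ≤ n) :
    abs ((∫ x in (0:ℝ)..1, |gfun n x|) - 4/π) ≤ 2 * tTail n := by
  have hup : (∫ x in (0:ℝ)..1, |gfun n x|) ≤ ∫ x in (0:ℝ)..1, (2 * trigA n x + 2 * tTail n) := by
    apply intervalIntegral.integral_mono_on (by norm_num)
      ((cont_absg n).intervalIntegrable 0 1)
      (((continuous_const.mul (cont_trigA n)).add continuous_const).intervalIntegrable 0 1)
    intro x hx
    have := pointwise_est hn hx
    have := abs_le.mp this
    show |gfun n x| ≤ 2 * trigA n x + 2 * tTail n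
    linarith [this.2]
  have hlo : (∫ x in (0:ℝ)..1, (2 * trigA n x - 2 * tTail n)) ≤ ∫ x in (0:ℝ)..1, |gfun n x| := by
    apply intervalIntegral.integral_mono_on (by norm_num)
      (((continuous_const.mul (cont_trigA n)).sub continuous_const).intervalIntegrable 0 1)
      ((cont_absg n).intervalIntegrable 0 1)
    intro x hx
    have := abs_le.mp (pointwise_est hn hx)
    show 2 * trigA n x - 2 * tTail n ≤ |gfun n x|
    linarith [this.1]
  have e1 : (∫ x in (0:ℝ)..1, (2 * trigA n x + 2 * tTail n)) = 4/π + 2 * tTail n := by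
    rw [intervalIntegral.integral_add (f := fun x => 2 * trigA n x) ((continuous_const.mul (cont_trigA n)).intervalIntegrable 0 1)
      (intervalIntegrable_const), intervalIntegral.integral_const_mul, int_trigA,
      intervalIntegral.integral_const, smul_eq_mul]
    ring
  have e2 : (∫ x in (0:ℝ)..1, (2 * trigA n x - 2 * tTail n)) = 4/π - 2 * tTail n := by
    rw [intervalIntegral.integral_sub (f := fun x => 2 * trigA n x) ((continuous_const.mul (cont_trigA n)).intervalIntegrable 0 1)
      (intervalIntegrable_const), intervalIntegral.integral_const_mul, int_trigA,
      intervalIntegral.integral_const, smul_eq_mul]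
    ring
  rw [e1] at hup; rw [e2] at hlo
  rw [abs_le]
  constructor <;> linarith

/-- `‖p_n‖_1 ∼ 8/(2π)^{n+1}` as `n → ∞`; that is,
`lim_{n→∞} (2π)^{n+1} · (∫_0^1 |B_n(x)| dx) / (8·n!) = 1`. -/
theorem L1_norm_pB_asymptotics :
    Tendsto
      (fun n : ℕ =>
        (2 * π) ^ (n + 1) * (∫ x in (0:ℝ)..1, |bernPoly n x|) /
          (8 * (n.factorial : ℝ)))
      atTop (nhds 1) := by
  have hpi := pi_pos
  have hratio : ∀ n : ℕ,
      (2 * π) ^ (n + 1) * (∫ x in (0:ℝ)..1, |bernPoly n x|) / (8 * (n.factorial : ℝ))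
        = (π/4) * ∫ x in (0:ℝ)..1, |gfun n x| := by
    intro n
    have habs : ∀ x : ℝ, |gfun n x| = (2*π)^n / (n.factorial : ℝ) * |bernPoly n x| := by
      intro x
      rw [gfun, abs_mul, abs_of_nonneg (by positivity : (0:ℝ) ≤ (2*π)^n / (n.factorial : ℝ))]
    simp only [habs]
    rw [intervalIntegral.integral_const_mul]
    have hfac : ((n.factorial : ℕ) : ℝ) ≠ 0 := by positivity
    field_simp
    ring
  simp only [hratio]
  apply tendsto_sub_nhds_zero_iff.mp
  apply squeeze_zero_norm' (a := fun n : ℕ => (π/2) * ((1/2)^n * (4 * tTail 2)))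
  · filter_upwards [eventually_ge_atTop 2] with n hn
    obtain ⟨m, rfl⟩ : ∃ m, n = m + 2 := ⟨n - 2, by omega⟩
    have hie := int_est (n := m+2) (by omega)
    have hdiff : (π/4) * (∫ x in (0:ℝ)..1, |gfun (m+2) x|) - 1
        = (π/4) * ((∫ x in (0:ℝ)..1, |gfun (m+2) x|) - 4/π) := by
      field_simp
    rw [Real.norm_eq_abs, hdiff, abs_mul, abs_of_nonneg (by positivity : (0:ℝ) ≤ π/4)]
    calc π/4 * abs ((∫ x in (0:ℝ)..1, |gfun (m+2) x|) - 4/π)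
        ≤ π/4 * (2 * tTail (m+2)) := by
          apply mul_le_mul_of_nonneg_left hie (by positivity)
      _ ≤ π/4 * (2 * ((1/2)^(m+2) * (4 * tTail 2))) := by
          apply mul_le_mul_of_nonneg_left (by linarith [tTail_le (m := m)]) (by positivity)
      _ = π/2 * ((1/2)^(m+2) * (4 * tTail 2)) := by ring
  · have h0 : Tendsto (fun n : ℕ => ((1:ℝ)/2)^n) atTop (nhds 0) :=
      tendsto_pow_atTop_nhds_zero_of_lt_one (by norm_num) (by norm_num)
    have := (h0.mul_const (4 * tTail 2)).const_mul (π/2)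
    simpa using this
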